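/- If every member of a set a is a level, then pot(a) is itself a level. -/
import Mathlib


def pot (a : ZFSet) : ZFSet :=
  ZFSet.sep (fun x => ∃ c ∈ a, x ⊆ c) (ZFSet.powerset (ZFSet.sUnion a))

def Potent (a : ZFSet) : Prop := ∀ x, (∃ c, x ⊆ c ∧ c ∈ a) → x ∈ a

def IsHistory (h : ZFSet) : Prop := ∀ x ∈ h, x = pot (x ∩ h)

def IsLevel (s : ZFSet) : Prop := ∃ h, IsHistory h ∧ s = pot h

theorem mem_pot {x a : ZFSet} : x ∈ pot a ↔ ∃ c ∈ a, x ⊆ c := by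
  unfold pot
  rw [ZFSet.mem_sep]
  constructor
  · rintro ⟨-, hc⟩; exact hc
  · rintro ⟨c, hc, hxc⟩
    refine ⟨?_, c, hc, hxc⟩
    rw [ZFSet.mem_powerset]
    intro y hy
    exact ZFSet.mem_sUnion.2 ⟨c, hc, hxc hy⟩

theorem pot_mono {s t : ZFSet} (h : s ⊆ t) : pot s ⊆ pot t := by
  intro x hx
  obtain ⟨c, hc, hxc⟩ := mem_pot.1 hx
  exact mem_pot.2 ⟨c, h hc, hxc⟩

/-- Master lemma: every member of a history is a level, is transitive,
and equals `pot` of its set of level-members. -/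
theorem history_mem (c : ZFSet) : ∀ h : ZFSet, IsHistory h → c ∈ h →
    IsLevel c ∧ (∀ x ∈ c, x ⊆ c) ∧ c = pot (ZFSet.sep IsLevel c) := by
  induction c using ZFSet.inductionOn with
  | _ c IH =>
    intro h hh hc
    have hceq : c = pot (c ∩ h) := hh c hc
    -- every element of c ∩ h is a subset of c
    have hdc : ∀ d ∈ c ∩ h, d ⊆ c := by
      intro d hd
      rw [ZFSet.mem_inter] at hd
      obtain ⟨-, hdt, -⟩ := IH d hd.1 h hh hd.2
      have hsub : d ∩ h ⊆ c ∩ h := by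
        intro e he
        rw [ZFSet.mem_inter] at he ⊢
        refine ⟨?_, he.2⟩
        rw [hceq]
        exact mem_pot.2 ⟨d, ZFSet.mem_inter.2 hd, hdt e he.1⟩
      calc d = pot (d ∩ h) := hh d hd.2
        _ ⊆ pot (c ∩ h) := pot_mono hsub
        _ = c := hceq.symm
    -- c is transitive
    have htrans : ∀ x ∈ c, x ⊆ c := by
      intro x hx
      rw [hceq, mem_pot] at hx
      obtain ⟨d, hd, hxd⟩ := hx
      exact hxd.trans (hdc d hd)
    -- c ∩ h is a history
    have hhist : IsHistory (c ∩ h) := by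
      intro y hy
      have hy' := hy
      rw [ZFSet.mem_inter] at hy'
      have hyeq : y = pot (y ∩ h) := hh y hy'.2
      apply ZFSet.ext
      intro x
      constructor
      · intro hx
        rw [hyeq] at hx
        refine pot_mono ?_ hx
        intro e he
        rw [ZFSet.mem_inter] at he
        rw [ZFSet.mem_inter, ZFSet.mem_inter]
        exact ⟨he.1, hdc y hy he.1, he.2⟩
      · intro hx
        rw [hyeq]
        refine pot_mono ?_ hx
        intro e he
        rw [ZFSet.mem_inter, ZFSet.mem_inter] at he
        rw [ZFSet.mem_inter]
        exact ⟨he.1, he.2.2⟩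
    have hlevel : IsLevel c := ⟨c ∩ h, hhist, hceq⟩
    refine ⟨hlevel, htrans, ?_⟩
    -- c = pot of its level members
    apply ZFSet.ext
    intro x
    constructor
    · intro hx
      rw [hceq, mem_pot] at hx
      obtain ⟨d, hd, hxd⟩ := hx
      have hd' := hd
      rw [ZFSet.mem_inter] at hd'
      obtain ⟨hdl, -, -⟩ := IH d hd'.1 h hh hd'.2
      exact mem_pot.2 ⟨d, ZFSet.mem_sep.2 ⟨hd'.1, hdl⟩, hxd⟩
    · intro hx
      obtain ⟨w, hw, hxw⟩ := mem_pot.1 hx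
      rw [ZFSet.mem_sep] at hw
      rw [hceq]
      have := hw.1
      rw [hceq, mem_pot] at this
      obtain ⟨d, hd, hwd⟩ := this
      exact mem_pot.2 ⟨d, hd, hxw.trans hwd⟩

theorem level_trans {V : ZFSet} (hV : IsLevel V) : ∀ x ∈ V, x ⊆ V := by
  obtain ⟨h0, hh, rfl⟩ := hV
  intro x hx
  obtain ⟨d, hd, hxd⟩ := mem_pot.1 hx
  refine hxd.trans ?_
  calc d = pot (d ∩ h0) := hh d hd
    _ ⊆ pot h0 := pot_mono fun e he => (ZFSet.mem_inter.1 he).2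

theorem level_eq {V : ZFSet} (hV : IsLevel V) : V = pot (ZFSet.sep IsLevel V) := by
  obtain ⟨h0, hh, rfl⟩ := hV
  apply ZFSet.ext
  intro x
  constructor
  · intro hx
    obtain ⟨d, hd, hxd⟩ := mem_pot.1 hx
    obtain ⟨hdl, -, -⟩ := history_mem d h0 hh hd
    exact mem_pot.2 ⟨d, ZFSet.mem_sep.2 ⟨mem_pot.2 ⟨d, hd, fun _ h => h⟩, hdl⟩, hxd⟩
  · intro hx
    obtain ⟨w, hw, hxw⟩ := mem_pot.1 hx
    rw [ZFSet.mem_sep] at hw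
    obtain ⟨d, hd, hwd⟩ := mem_pot.1 hw.1
    exact mem_pot.2 ⟨d, hd, hxw.trans hwd⟩

theorem stmt14 (a : ZFSet) (h : ∀ x ∈ a, IsLevel x) : IsLevel (pot a) := by
  refine ⟨ZFSet.sep IsLevel (pot a), ?_, ?_⟩
  · -- it is a history
    intro V hV
    rw [ZFSet.mem_sep] at hV
    obtain ⟨hVpa, hVl⟩ := hV
    have hinter : V ∩ ZFSet.sep IsLevel (pot a) = ZFSet.sep IsLevel V := by
      apply ZFSet.ext
      intro w
      rw [ZFSet.mem_inter, ZFSet.mem_sep, ZFSet.mem_sep]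
      constructor
      · rintro ⟨hwV, -, hwl⟩; exact ⟨hwV, hwl⟩
      · rintro ⟨hwV, hwl⟩
        refine ⟨hwV, ?_, hwl⟩
        obtain ⟨c, hc, hVc⟩ := mem_pot.1 hVpa
        exact mem_pot.2 ⟨c, hc, level_trans (h c hc) w (hVc hwV)⟩
    rw [hinter]
    exact level_eq hVl
  · -- pot a = pot of the levels in pot a
    apply ZFSet.ext
    intro x
    constructor
    · intro hx
      obtain ⟨c, hc, hxc⟩ := mem_pot.1 hx
      exact mem_pot.2 ⟨c, ZFSet.mem_sep.2
        ⟨mem_pot.2 ⟨c, hc, fun _ h => h⟩, h c hc⟩, hxc⟩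
    · intro hx
      obtain ⟨V, hV, hxV⟩ := mem_pot.1 hx
      rw [ZFSet.mem_sep] at hV
      obtain ⟨c, hc, hVc⟩ := mem_pot.1 hV.1
      exact mem_pot.2 ⟨c, hc, hxV.trans hVc⟩
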